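/- Let q be a prime power and d ≥ 1. In the polynomial ring F̄_q[X_0,…,X_{d-1}], the Moore determinant det((X_i^{q^j})_{0≤i,j≤d-1}) equals a nonzero constant multiple of the product, over a set of representatives (a_0,…,a_{d-1}) of the points of P^{d-1}(F_q), of the linear forms a_0X_0 + ⋯ + a_{d-1}X_{d-1}. -/

import Mathlib

open MvPolynomial

/-- A product of pairwise non-associated primes, each dividing `n`, divides `n`. -/
theorem aux_prod_primes_dvd {α : Type*} [CommMonoidWithZero α] [IsCancelMulZero α] {ι : Type*}
    (s : Finset ι) (f : ι → α) :
    (∀ i ∈ s, Prime (f i)) →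
    (∀ i ∈ s, ∀ j ∈ s, i ≠ j → ¬ Associated (f i) (f j)) →
    ∀ n : α, (∀ i ∈ s, f i ∣ n) → (∏ i ∈ s, f i) ∣ n := by
  classical
  induction s using Finset.induction_on with
  | empty => simp
  | @insert a s' ha ih =>
    intro hp hna n hd
    obtain ⟨m, rfl⟩ := hd a (Finset.mem_insert_self a s')
    rw [Finset.prod_insert ha]
    apply mul_dvd_mul_left
    refine ih (fun i hi => hp i (Finset.mem_insert_of_mem hi))
      (fun i hi j hj hij => hna i (Finset.mem_insert_of_mem hi) j (Finset.mem_insert_of_mem hj) hij)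
      m (fun i hi => ?_)
    have hia : i ≠ a := fun h => ha (h ▸ hi)
    have h1 : f i ∣ f a * m := hd i (Finset.mem_insert_of_mem hi)
    have h2 : ¬ f i ∣ f a := fun hdvd =>
      hna i (Finset.mem_insert_of_mem hi) a (Finset.mem_insert_self a s') hia
        ((hp i (Finset.mem_insert_of_mem hi)).associated_of_dvd
          (hp a (Finset.mem_insert_self a s')) hdvd)
    exact ((hp i (Finset.mem_insert_of_mem hi)).dvd_or_dvd h1).resolve_left h2

/-- `X k` is prime in a multivariate polynomial ring over a field. -/
theorem aux_prime_X {K : Type*} [Field K] {d : ℕ} (k : Fin d) :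
    Prime (X k : MvPolynomial (Fin d) K) := by
  classical
  let e := (renameEquiv K (Equiv.optionSubtypeNe k).symm).trans
    (optionEquivLeft K {b : Fin d // b ≠ k})
  rw [← MulEquiv.prime_iff e.toRingEquiv.toMulEquiv]
  have : e (X k) = Polynomial.X := by
    show (optionEquivLeft K {b : Fin d // b ≠ k}) (rename (Equiv.optionSubtypeNe k).symm (X k))
      = Polynomial.X
    rw [rename_X, Equiv.optionSubtypeNe_symm_self, optionEquivLeft_X_none]
  rw [show e.toRingEquiv.toMulEquiv (X k) = e (X k) from rfl, this]
  exact Polynomial.prime_X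

/-- A linear form with a nonzero coefficient is prime. -/
theorem aux_prime_linear {K : Type*} [Field K] {d : ℕ} (a : Fin d → K) (k : Fin d)
    (hk : a k ≠ 0) : Prime (∑ i : Fin d, C (a i) * X i) := by
  classical
  set L : MvPolynomial (Fin d) K := ∑ i : Fin d, C (a i) * X i with hL
  let f : Fin d → MvPolynomial (Fin d) K := Function.update X k L
  let g : Fin d → MvPolynomial (Fin d) K :=
    Function.update X k (C (a k)⁻¹ * (X k - ∑ i ∈ Finset.univ.erase k, C (a i) * X i))
  have hsum : C (a k) * X k + ∑ i ∈ Finset.univ.erase k, C (a i) * X i = L := by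
    rw [hL]; exact Finset.add_sum_erase _ _ (Finset.mem_univ k)
  have hfg : (aeval f).comp (aeval g) = AlgHom.id K (MvPolynomial (Fin d) K) := by
    apply MvPolynomial.algHom_ext
    intro i
    by_cases hik : i = k
    · subst hik
      simp only [AlgHom.coe_comp, Function.comp_apply, aeval_X, AlgHom.id_apply]
      rw [show g i = C (a i)⁻¹ * (X i - ∑ j ∈ Finset.univ.erase i, C (a j) * X j) from
        Function.update_self _ _ _]
      rw [map_mul, map_sub, aeval_C, aeval_X, map_sum]
      have h1 : ∀ j ∈ Finset.univ.erase i, (aeval f) (C (a j) * X j) = C (a j) * X j := by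
        intro j hj
        rw [map_mul, aeval_C, aeval_X,
          show f j = X j from Function.update_of_ne (Finset.ne_of_mem_erase hj) _ _]
        rfl
      rw [Finset.sum_congr rfl h1]
      rw [show f i = L from Function.update_self _ _ _, ← hsum]
      rw [algebraMap_eq]
      rw [add_sub_cancel_right, ← mul_assoc, ← C_mul, inv_mul_cancel₀ hk, C_1, one_mul]
    · simp only [AlgHom.coe_comp, Function.comp_apply, aeval_X, AlgHom.id_apply]
      rw [show g i = X i from Function.update_of_ne hik _ _, aeval_X,
        show f i = X i from Function.update_of_ne hik _ _]
  have hgf : (aeval g).comp (aeval f) = AlgHom.id K (MvPolynomial (Fin d) K) := by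
    apply MvPolynomial.algHom_ext
    intro i
    by_cases hik : i = k
    · subst hik
      simp only [AlgHom.coe_comp, Function.comp_apply, aeval_X, AlgHom.id_apply]
      rw [show f i = L from Function.update_self _ _ _, hL, map_sum]
      have h1 : ∀ j ∈ Finset.univ.erase i, (aeval g) (C (a j) * X j) = C (a j) * X j := by
        intro j hj
        rw [map_mul, aeval_C, aeval_X,
          show g j = X j from Function.update_of_ne (Finset.ne_of_mem_erase hj) _ _]
        rfl
      rw [← Finset.add_sum_erase _ _ (Finset.mem_univ i), Finset.sum_congr rfl h1,
        map_mul, aeval_C, aeval_X,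
        show g i = C (a i)⁻¹ * (X i - ∑ j ∈ Finset.univ.erase i, C (a j) * X j) from
          Function.update_self _ _ _]
      rw [algebraMap_eq, ← mul_assoc, ← C_mul, mul_inv_cancel₀ hk, C_1, one_mul]
      ring
    · simp only [AlgHom.coe_comp, Function.comp_apply, aeval_X, AlgHom.id_apply]
      rw [show f i = X i from Function.update_of_ne hik _ _, aeval_X,
        show g i = X i from Function.update_of_ne hik _ _]
  let τ : MvPolynomial (Fin d) K ≃ₐ[K] MvPolynomial (Fin d) K :=
    AlgEquiv.ofAlgHom (aeval f) (aeval g) hfg hgf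
  have hτ : τ (X k) = L := by
    show (aeval f) (X k) = L
    rw [aeval_X]
    exact Function.update_self _ _ _
  rw [← hτ]
  exact (MulEquiv.prime_iff τ.toRingEquiv.toMulEquiv).mpr (aux_prime_X k)

theorem aux_isHomogeneous_smul {σ : Type*} {K : Type*} [CommRing K]
    {φ : MvPolynomial σ K} {n : ℕ} (z : ℤˣ) (h : φ.IsHomogeneous n) :
    (z • φ).IsHomogeneous n := by
  intro m hm
  apply h
  intro h0
  apply hm
  rw [Units.smul_def, coeff_smul, h0, smul_zero]

/-- If `M = P * R'` with `M, P` homogeneous of the same degree and `P ≠ 0`,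
then `R'` is a constant. -/
theorem aux_eq_C_of_factor {σ : Type*} {K : Type*} [CommRing K] [IsDomain K]
    {P M R' : MvPolynomial σ K} {N : ℕ}
    (hP : P.IsHomogeneous N) (hM : M.IsHomogeneous N) (hP0 : P ≠ 0) (hMP : M = P * R') :
    R' = C (coeff 0 R') := by
  classical
  have hcomp : ∀ k : ℕ, k ≠ 0 → homogeneousComponent k R' = 0 := by
    intro k hk
    have hzero : P * homogeneousComponent k R' = 0 := by
      apply MvPolynomial.ext
      intro m
      rw [coeff_zero]
      by_cases hm : m.degree = N + k
      · have h1 : coeff m (P * homogeneousComponent k R') = coeff m (P * R') := by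
          rw [coeff_mul, coeff_mul]
          apply Finset.sum_congr rfl
          rintro ⟨x, y⟩ hxy
          rw [Finset.HasAntidiagonal.mem_antidiagonal] at hxy
          by_cases hx : coeff x P = 0
          · simp [hx]
          · have hdx : x.degree = N := by
              rw [Finsupp.degree_eq_weight_one]; exact hP hx
            have hdy : y.degree = k := by
              have hadd : m.degree = x.degree + y.degree := by
                rw [← hxy, Finsupp.degree_eq_weight_one, map_add]
              omega
            rw [coeff_homogeneousComponent, if_pos hdy]
        rw [h1, ← hMP]
        exact hM.coeff_eq_zero (by omega)
      · exact (hP.mul (homogeneousComponent_isHomogeneous k R')).coeff_eq_zero hm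
    rcases mul_eq_zero.mp hzero with h | h
    · exact absurd h hP0
    · exact h
  conv_lhs => rw [← sum_homogeneousComponent R']
  rw [Finset.sum_eq_single 0]
  · exact homogeneousComponent_zero R'
  · intro i _ hi
    exact hcomp i hi
  · intro h
    exact absurd (Finset.mem_range.mpr (Nat.succ_pos _)) h
  

theorem aux_prod_monomial {ι τ K : Type*} [CommSemiring K] (s : Finset ι)
    (g : ι → (τ →₀ ℕ)) :
    ∏ i ∈ s, (monomial (g i) (1 : K)) = monomial (∑ i ∈ s, g i) 1 := by
  classical
  induction s using Finset.induction_on with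
  | empty => simp
  | @insert a s' ha ih =>
    rw [Finset.prod_insert ha, Finset.sum_insert ha, ih, monomial_mul, one_mul]

theorem aux_det_isHomogeneous {K : Type*} [CommRing K] {d q : ℕ} :
    ((Matrix.of fun i j : Fin d =>
      (X i : MvPolynomial (Fin d) K) ^ q ^ (j : ℕ)).det).IsHomogeneous
      (∑ j : Fin d, q ^ (j : ℕ)) := by
  rw [Matrix.det_apply]
  apply MvPolynomial.IsHomogeneous.sum
  intro σ _
  apply aux_isHomogeneous_smul
  have : ∀ i : Fin d,
      ((Matrix.of fun i j : Fin d => (X i : MvPolynomial (Fin d) K) ^ q ^ (j : ℕ)) (σ i) i)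
        = (X (σ i) : MvPolynomial (Fin d) K) ^ q ^ (i : ℕ) := fun i => rfl
  simp_rw [this]
  exact MvPolynomial.IsHomogeneous.prod Finset.univ
    (fun i : Fin d => (X (σ i) : MvPolynomial (Fin d) K) ^ q ^ (i : ℕ))
    (fun i : Fin d => q ^ (i : ℕ)) (fun i _ => isHomogeneous_X_pow _ _)

theorem aux_det_ne_zero {K : Type*} [CommRing K] [Nontrivial K] {d q : ℕ} (hq : 2 ≤ q) :
    (Matrix.of fun i j : Fin d =>
      (X i : MvPolynomial (Fin d) K) ^ q ^ (j : ℕ)).det ≠ 0 := by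
  classical
  set m0 : Fin d →₀ ℕ := ∑ i : Fin d, Finsupp.single i (q ^ (i : ℕ)) with hm0
  have hcoeff : coeff m0 ((Matrix.of fun i j : Fin d =>
      (X i : MvPolynomial (Fin d) K) ^ q ^ (j : ℕ)).det) = 1 := by
    rw [Matrix.det_apply, MvPolynomial.coeff_sum]
    have hterm : ∀ σ : Equiv.Perm (Fin d),
        coeff m0 (Equiv.Perm.sign σ •
          ∏ i : Fin d, (Matrix.of fun i j : Fin d =>
            (X i : MvPolynomial (Fin d) K) ^ q ^ (j : ℕ)) (σ i) i)
        = Equiv.Perm.sign σ •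
            (if (∑ i : Fin d, Finsupp.single (σ i) (q ^ (i : ℕ))) = m0 then (1 : K) else 0) := by
      intro σ
      have h1 : (∏ i : Fin d, (Matrix.of fun i j : Fin d =>
            (X i : MvPolynomial (Fin d) K) ^ q ^ (j : ℕ)) (σ i) i)
          = monomial (∑ i : Fin d, Finsupp.single (σ i) (q ^ (i : ℕ))) (1 : K) := by
        rw [← aux_prod_monomial]
        apply Finset.prod_congr rfl
        intro i _
        show (X (σ i) : MvPolynomial (Fin d) K) ^ q ^ (i : ℕ) = _
        rw [X_pow_eq_monomial]
      rw [h1, Units.smul_def, Units.smul_def, coeff_smul, coeff_monomial]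
    rw [Finset.sum_congr rfl (fun σ _ => hterm σ)]
    rw [Finset.sum_eq_single (1 : Equiv.Perm (Fin d))]
    · rw [if_pos (by simp [hm0]), map_one, one_smul]
    · intro σ _ hσ
      rw [if_neg, smul_zero]
      intro h
      apply hσ
      have hj : ∀ j : Fin d, σ j = j := by
        intro j
        have h2 := congrArg (fun t : Fin d →₀ ℕ => t (σ j)) h
        simp only [hm0, Finsupp.finset_sum_apply, Finsupp.single_apply] at h2
        have h3 : ∀ i : Fin d, (if σ i = σ j then q ^ (i : ℕ) else 0)
            = (if i = j then q ^ (i : ℕ) else 0) := by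
          intro i; simp [σ.injective.eq_iff]
        rw [Finset.sum_congr rfl (fun i _ => h3 i)] at h2
        rw [Finset.sum_ite_eq' Finset.univ j, if_pos (Finset.mem_univ j)] at h2
        rw [Finset.sum_ite_eq' Finset.univ (σ j), if_pos (Finset.mem_univ (σ j))] at h2
        have := Nat.pow_right_injective hq h2
        exact Fin.val_injective this.symm
      exact Equiv.ext hj
    · intro h
      exact absurd (Finset.mem_univ _) h
  intro h
  rw [h, coeff_zero] at hcoeff
  exact zero_ne_one hcoeff

theorem aux_geom (d q : ℕ) (hq : 2 ≤ q) :
    (q - 1) * ∑ j ∈ Finset.range d, q ^ j = q ^ d - 1 := by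
  induction d with
  | zero => simp
  | succ d ih =>
    rw [Finset.sum_range_succ, Nat.mul_add, ih, pow_succ]
    have h1 : 1 ≤ q ^ d := Nat.one_le_pow _ _ (by omega)
    have h3 : (q - 1) * q ^ d = q ^ d * q - q ^ d := by
      rw [Nat.sub_mul, one_mul, mul_comm]
    have h2 : q ^ d * 1 ≤ q ^ d * q := Nat.mul_le_mul_left _ (by omega)
    rw [h3]
    omega

theorem aux_card_proj (F : Type*) [Field F] [Fintype F] (d : ℕ) :
    Nat.card (Projectivization F (Fin d → F)) * (Fintype.card F - 1)
      = Fintype.card F ^ d - 1 := by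
  classical
  have e2 : ∀ p : Projectivization F (Fin d → F),
      Fˣ ≃ {w : {v : Fin d → F // v ≠ 0} // Projectivization.mk' F w = p} := by
    intro p
    refine Equiv.ofBijective (fun u : Fˣ =>
      ⟨⟨u • p.rep, ?_⟩, ?_⟩) ⟨?_, ?_⟩
    · rw [Units.smul_def]
      exact smul_ne_zero (Units.ne_zero u) p.rep_nonzero
    · rw [Projectivization.mk'_eq_mk]
      refine Eq.trans ?_ (Projectivization.mk_rep p)
      exact (Projectivization.mk_eq_mk_iff F _ _ _ p.rep_nonzero).mpr ⟨u, rfl⟩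
    · intro u u' h
      have h2 : u • p.rep = u' • p.rep := congrArg (fun w => w.1.1) h
      rw [Units.smul_def, Units.smul_def] at h2
      exact Units.ext (smul_left_injective F p.rep_nonzero h2)
    · rintro ⟨⟨w, hw⟩, hp⟩
      rw [Projectivization.mk'_eq_mk] at hp
      obtain ⟨u, hu⟩ := (Projectivization.mk_eq_mk_iff F w p.rep hw p.rep_nonzero).mp
        (hp.trans (Projectivization.mk_rep p).symm)
      exact ⟨u, by apply Subtype.ext; apply Subtype.ext; exact hu⟩
  have e3 : {v : Fin d → F // v ≠ 0} ≃ (Projectivization F (Fin d → F)) × Fˣ :=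
    ((Equiv.sigmaFiberEquiv (fun w : {v : Fin d → F // v ≠ 0} =>
        Projectivization.mk' F w)).symm.trans
      (Equiv.sigmaCongrRight (fun p => (e2 p).symm))).trans
      (Equiv.sigmaEquivProd _ _)
  have h1 := Nat.card_congr e3
  rw [Nat.card_prod] at h1
  have h2 : Nat.card {v : Fin d → F // v ≠ 0} = Fintype.card F ^ d - 1 := by
    have e : {v : Fin d → F // v ≠ 0} ≃ {x : Fin d → F // ¬ x = 0} := Equiv.refl _
    rw [Nat.card_congr e, Nat.card_eq_fintype_card, Fintype.card_subtype_compl,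
      Fintype.card_subtype_eq (0 : Fin d → F), Fintype.card_fun, Fintype.card_fin]
  have h3 : Nat.card Fˣ = Fintype.card F - 1 := by
    rw [Nat.card_units, Nat.card_eq_fintype_card]
  rw [h2, h3] at h1
  exact h1.symm

/-- The Moore determinant polynomial equals a nonzero constant times the product of the
linear forms attached to a set of representatives of `P^{d-1}(F_q)`. -/
theorem stmt_1 (F : Type*) [Field F] [Fintype F] (d : ℕ) (hd : 1 ≤ d)
    (rep : Projectivization F (Fin d → F) → (Fin d → F))
    (hne : ∀ v, rep v ≠ 0)
    (hrep : ∀ v, Projectivization.mk F (rep v) (hne v) = v) :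
    ∃ c : AlgebraicClosure F, c ≠ 0 ∧
      (Matrix.of fun i j : Fin d =>
          (X i : MvPolynomial (Fin d) (AlgebraicClosure F)) ^ Fintype.card F ^ (j : ℕ)).det
        = C c * ∏ᶠ v : Projectivization F (Fin d → F),
            ∑ i : Fin d, C (algebraMap F (AlgebraicClosure F) (rep v i)) * X i := by
  classical
  set K := AlgebraicClosure F with hK
  set q := Fintype.card F with hq
  have hq2 : 2 ≤ q := Fintype.one_lt_card
  set A := Matrix.of fun i j : Fin d => (X i : MvPolynomial (Fin d) K) ^ q ^ (j : ℕ) with hA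
  haveI : Finite (Projectivization F (Fin d → F)) :=
    Quotient.finite (projectivizationSetoid F (Fin d → F))
  haveI : Fintype (Projectivization F (Fin d → F)) := Fintype.ofFinite _
  set L : Projectivization F (Fin d → F) → MvPolynomial (Fin d) K :=
    fun v => ∑ i : Fin d, C (algebraMap F K (rep v i)) * X i with hL
  have hinj : Function.Injective (algebraMap F K) := (algebraMap F K).injective
  have hkey : ∀ v, ∃ k, rep v k ≠ 0 := by
    intro v
    by_contra h
    push_neg at h
    exact hne v (funext h)
  have hLprime : ∀ v, Prime (L v) := by
    intro v
    obtain ⟨k, hk⟩ := hkey v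
    exact aux_prime_linear _ k (fun h => hk (hinj (h.trans (map_zero _).symm)))
  have hhom : ∀ v, (L v).IsHomogeneous 1 := by
    intro v
    exact IsHomogeneous.sum Finset.univ _ 1 (fun i _ => isHomogeneous_C_mul_X _ _)
  have hcoeffL : ∀ v i, coeff (Finsupp.single i 1) (L v) = algebraMap F K (rep v i) := by
    intro v i
    rw [hL]
    rw [MvPolynomial.coeff_sum]
    have h1 : ∀ j : Fin d, coeff (Finsupp.single i 1) (C (algebraMap F K (rep v j)) * X j)
        = if j = i then algebraMap F K (rep v j) else 0 := by
      intro j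
      rw [coeff_C_mul, coeff_X']
      by_cases hji : j = i
      · rw [if_pos hji, if_pos (by rw [hji]), mul_one]
      · rw [if_neg hji, if_neg (fun h => hji (by
          have := Finsupp.single_left_injective (α := Fin d) (one_ne_zero (α := ℕ)) h
          exact this)), mul_zero]
    rw [Finset.sum_congr rfl (fun j _ => h1 j), Finset.sum_ite_eq' Finset.univ i,
      if_pos (Finset.mem_univ i)]
  -- pairwise non-associated
  have hLassoc : ∀ v w : Projectivization F (Fin d → F), v ≠ w →
      ¬ Associated (L v) (L w) := by
    intro v w hvw hassoc
    obtain ⟨u, hu⟩ := hassoc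
    have hfac : L w = L v * (u : MvPolynomial (Fin d) K) := hu.symm
    have hCc := aux_eq_C_of_factor (hhom v) (hhom w) (hLprime v).ne_zero hfac
    set c : K := coeff 0 (u : MvPolynomial (Fin d) K) with hc
    obtain ⟨k, hk⟩ := hkey v
    have hcoeffs : ∀ i, algebraMap F K (rep w i) = algebraMap F K (rep v i) * c := by
      intro i
      have := congrArg (coeff (Finsupp.single i 1)) hfac
      rw [hcoeffL, hCc, mul_comm (L v) (C c), coeff_C_mul, hcoeffL] at this
      rw [this, mul_comm]
    have hvk : algebraMap F K (rep v k) ≠ 0 :=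
      fun h => hk (hinj (h.trans (map_zero _).symm))
    set c' : F := rep w k / rep v k with hc'
    have hcc' : c = algebraMap F K c' := by
      rw [hc', map_div₀]
      rw [eq_div_iff hvk]
      rw [mul_comm]
      exact (hcoeffs k).symm
    have hrepw : ∀ i, rep w i = c' * rep v i := by
      intro i
      apply hinj
      rw [map_mul, hcoeffs i, hcc', mul_comm]
    have hc'0 : c' ≠ 0 := by
      intro h0
      apply hne w
      funext i
      rw [hrepw i, h0, zero_mul]
      rfl
    have hmk : Projectivization.mk F (rep w) (hne w) = Projectivization.mk F (rep v) (hne v) := by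
      rw [Projectivization.mk_eq_mk_iff']
      exact ⟨c', by funext i; rw [hrepw i]; rfl⟩
    rw [hrep, hrep] at hmk
    exact hvw hmk.symm
  -- divisibility
  have hdvd : ∀ v, L v ∣ A.det := by
    intro v
    obtain ⟨k, hk⟩ := hkey v
    set a : Fin d → K := fun i => algebraMap F K (rep v i) with ha
    have hak : a k ≠ 0 := fun h => hk (hinj (h.trans (map_zero _).symm))
    obtain ⟨p, hp⟩ := CharP.exists F
    haveI := hp
    obtain ⟨n, hpn, hcardq⟩ := FiniteField.card F p
    haveI : Fact p.Prime := ⟨hpn⟩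
    haveI : CharP K p := charP_of_injective_algebraMap hinj p
    haveI : CharP (MvPolynomial (Fin d) K) p :=
      charP_of_injective_ringHom (C_injective (Fin d) K) p
    have hfrob : ∀ j : ℕ, (L v) ^ q ^ j = ∑ i : Fin d, C (a i) * (X i) ^ q ^ j := by
      intro j
      have hqj : q ^ j = p ^ ((n : ℕ) * j) := by rw [hq, hcardq, ← pow_mul]
      rw [hqj, hL]
      rw [sum_pow_char_pow]
      apply Finset.sum_congr rfl
      intro i _
      rw [mul_pow, ← C_pow, ← map_pow, ← hqj, hq, FiniteField.pow_card_pow]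
    have hrow : (fun j : Fin d => (L v) ^ q ^ (j : ℕ))
        = ∑ i : Fin d, (C (a i) : MvPolynomial (Fin d) K) • A i := by
      funext j
      rw [Finset.sum_apply, hfrob (j : ℕ)]
      apply Finset.sum_congr rfl
      intro i _
      rw [Pi.smul_apply, smul_eq_mul]
      rfl
    have h1 : (A.updateRow k (fun j : Fin d => (L v) ^ q ^ (j : ℕ))).det
        = C (a k) * A.det := by
      rw [hrow, Matrix.det_updateRow_sum A k (fun i => C (a i)), smul_eq_mul]
    have h2 : (A.updateRow k (fun j : Fin d => (L v) ^ q ^ (j : ℕ))).det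
        = L v * (A.updateRow k (fun j : Fin d => (L v) ^ (q ^ (j : ℕ) - 1))).det := by
      have h3 : (fun j : Fin d => (L v) ^ q ^ (j : ℕ))
          = L v • (fun j : Fin d => (L v) ^ (q ^ (j : ℕ) - 1)) := by
        funext j
        rw [Pi.smul_apply, smul_eq_mul, ← pow_succ']
        congr 1
        have : 1 ≤ q ^ (j : ℕ) := Nat.one_le_pow _ _ (by omega)
        omega
      rw [h3, Matrix.det_updateRow_smul]
    have hdvd2 : L v ∣ C (a k) * A.det := ⟨_, by rw [← h1, h2]⟩
    have hnd : ¬ L v ∣ C (a k) := by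
      intro hdvdC
      obtain ⟨t, ht⟩ := hdvdC
      have : IsUnit (L v) := by
        apply IsUnit.of_mul_eq_one (t * C (a k)⁻¹)
        rw [← mul_assoc, ← ht, ← C_mul, mul_inv_cancel₀ hak, C_1]
      exact (hLprime v).not_isUnit this
    exact ((hLprime v).2.2 _ _ hdvd2).resolve_left hnd
  -- the product divides the determinant
  have hPdvd : (∏ v, L v) ∣ A.det :=
    aux_prod_primes_dvd Finset.univ L (fun v _ => hLprime v)
      (fun v _ w _ hvw => hLassoc v w hvw) A.det (fun v _ => hdvd v)
  obtain ⟨R', hR'⟩ := hPdvd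
  have hcard : Fintype.card (Projectivization F (Fin d → F)) = ∑ j : Fin d, q ^ (j : ℕ) := by
    have h1 := aux_card_proj F d
    have h2 := aux_geom d q hq2
    rw [Nat.card_eq_fintype_card] at h1
    have h3 : ∑ j : Fin d, q ^ (j : ℕ) = ∑ j ∈ Finset.range d, q ^ j :=
      Fin.sum_univ_eq_sum_range _ _
    apply Nat.eq_of_mul_eq_mul_right (show 0 < q - 1 by omega)
    rw [h1, h3, mul_comm, h2]
  have hPhom : (∏ v, L v).IsHomogeneous (Fintype.card (Projectivization F (Fin d → F))) := by
    have := IsHomogeneous.prod Finset.univ L (fun _ => 1) (fun v _ => hhom v)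
    simpa using this
  have hP0 : (∏ v, L v) ≠ 0 := Finset.prod_ne_zero_iff.mpr fun v _ => (hLprime v).ne_zero
  have hMhom : (A.det).IsHomogeneous (Fintype.card (Projectivization F (Fin d → F))) := by
    rw [hcard]
    exact aux_det_isHomogeneous
  have hCc := aux_eq_C_of_factor hPhom hMhom hP0 hR'
  refine ⟨coeff 0 R', ?_, ?_⟩
  · intro h0
    apply aux_det_ne_zero (K := K) (d := d) hq2
    rw [← hA, hR', hCc, h0, C_0, mul_zero]
  · rw [finprod_eq_prod_of_fintype]
    conv_lhs => rw [hR', hCc]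
    ring
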